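/- Let C₁ > 0, T > 0, and let z : [0,T] → ℝ be differentiable with z′(t) ≤ −2C₁·z(t)² + 2e·C₁²·z(t) + 2e²·C₁³ for all t ∈ [0,T], where e is Euler's number. Then z(t) ≤ max{ z(0), ((1+√5)/2)·e·C₁ } for all t ∈ [0,T]. -/
import Mathlib


/-- Riccati-type differential inequality: if `z` is differentiable on
`[0,T]` with `z' ≤ −2C₁z² + 2eC₁²z + 2e²C₁³` there, then
`z(t) ≤ max{z(0), ((1+√5)/2) e C₁}` on `[0,T]`. -/
theorem riccati_inequality_bound (C₁ T : ℝ) (hC₁ : 0 < C₁) (hT : 0 < T)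
    (z z' : ℝ → ℝ)
    (hz : ∀ t ∈ Set.Icc (0 : ℝ) T, HasDerivAt z (z' t) t)
    (hineq : ∀ t ∈ Set.Icc (0 : ℝ) T,
      z' t ≤ -2 * C₁ * (z t) ^ 2 + 2 * Real.exp 1 * C₁ ^ 2 * z t
        + 2 * (Real.exp 1) ^ 2 * C₁ ^ 3) :
    ∀ t ∈ Set.Icc (0 : ℝ) T,
      z t ≤ max (z 0) ((1 + Real.sqrt 5) / 2 * Real.exp 1 * C₁) := by
  set M : ℝ := max (z 0) ((1 + Real.sqrt 5) / 2 * Real.exp 1 * C₁) with hM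
  have h5 : Real.sqrt 5 ^ 2 = 5 := Real.sq_sqrt (by norm_num)
  have h5nn : (0:ℝ) ≤ Real.sqrt 5 := Real.sqrt_nonneg 5
  have hepos : (0:ℝ) < Real.exp 1 := Real.exp_pos 1
  -- key: if y ≥ φ e C₁ then RHS ≤ 0
  have key : ∀ y : ℝ, (1 + Real.sqrt 5) / 2 * Real.exp 1 * C₁ ≤ y →
      -2 * C₁ * y ^ 2 + 2 * Real.exp 1 * C₁ ^ 2 * y
        + 2 * (Real.exp 1) ^ 2 * C₁ ^ 3 ≤ 0 := by
    intro y hy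
    have h51 : (1:ℝ) ≤ Real.sqrt 5 := by
      rw [show (1:ℝ) = Real.sqrt 1 from Real.sqrt_one.symm]
      exact Real.sqrt_le_sqrt (by norm_num)
    have heC : (0:ℝ) < Real.exp 1 * C₁ := mul_pos hepos hC₁
    have hfac2 : (0:ℝ) ≤ y + (Real.sqrt 5 - 1) / 2 * Real.exp 1 * C₁ := by nlinarith
    have hprod : 0 ≤ (y - (1 + Real.sqrt 5) / 2 * Real.exp 1 * C₁) *
        (y + (Real.sqrt 5 - 1) / 2 * Real.exp 1 * C₁) :=
      mul_nonneg (sub_nonneg.2 hy) hfac2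
    nlinarith [hprod, heC, sq_nonneg (Real.exp 1 * C₁),
      mul_nonneg (sq_nonneg (Real.exp 1 * C₁)) hC₁.le]
  intro t₀ ht₀
  by_contra hcon
  push_neg at hcon
  have ht₀0 : (0:ℝ) ≤ t₀ := ht₀.1
  -- continuity of z on [0,T]
  have hcont : ContinuousOn z (Set.Icc 0 T) := fun x hx =>
    (hz x hx).continuousAt.continuousWithinAt
  set S : Set ℝ := {t | t ∈ Set.Icc (0:ℝ) t₀ ∧ z t ≤ M} with hS
  have hsub : Set.Icc (0:ℝ) t₀ ⊆ Set.Icc 0 T :=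
    Set.Icc_subset_Icc le_rfl ht₀.2
  have hScl : IsClosed S := by
    have : S = Set.Icc (0:ℝ) t₀ ∩ z ⁻¹' (Set.Iic M) := by
      ext x; simp [hS, Set.mem_inter_iff, and_comm]
    rw [this]
    exact (hcont.mono hsub).preimage_isClosed_of_isClosed isClosed_Icc isClosed_Iic
  have hScomp : IsCompact S := (isCompact_Icc (a := (0:ℝ)) (b := t₀)).of_isClosed_subset
    hScl (fun x hx => hx.1)
  have h0S : (0:ℝ) ∈ S := ⟨⟨le_rfl, ht₀0⟩, le_max_left _ _⟩
  obtain ⟨s, hsS, hub⟩ := hScomp.exists_isGreatest ⟨0, h0S⟩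
  obtain ⟨⟨hs0, hst⟩, hzs⟩ := hsS
  have hst₀ : s < t₀ := by
    rcases lt_or_eq_of_le hst with h | h
    · exact h
    · exact absurd (h ▸ hzs) (not_le.2 hcon)
  -- on (s, t₀], z > M
  have hgt : ∀ x ∈ Set.Ioc s t₀, M < z x := by
    intro x hx
    by_contra hx'
    push_neg at hx'
    have hxS : x ∈ S := ⟨⟨le_trans hs0 hx.1.le, hx.2⟩, hx'⟩
    exact absurd (hub hxS) (not_le.2 hx.1)
  -- z antitone on [s, t₀]
  have hanti : AntitoneOn z (Set.Icc s t₀) := by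
    have hsubst : Set.Icc s t₀ ⊆ Set.Icc 0 T :=
      Set.Icc_subset_Icc hs0 ht₀.2
    apply antitoneOn_of_deriv_nonpos (convex_Icc s t₀) (hcont.mono hsubst)
    · intro x hx
      rw [interior_Icc] at hx
      exact ((hz x (hsubst ⟨hx.1.le, hx.2.le⟩)).differentiableAt).differentiableWithinAt
    intro x hx
    rw [interior_Icc] at hx
    have hxT : x ∈ Set.Icc (0:ℝ) T := hsubst ⟨hx.1.le, hx.2.le⟩
    rw [(hz x hxT).deriv]
    have hMx : M < z x := hgt x ⟨hx.1, hx.2.le⟩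
    have : (1 + Real.sqrt 5) / 2 * Real.exp 1 * C₁ ≤ z x :=
      le_trans (le_max_right _ _) hMx.le
    exact le_trans (hineq x hxT) (key _ this)
  have : z t₀ ≤ z s :=
    hanti ⟨le_rfl, hst₀.le⟩ ⟨hst₀.le, le_rfl⟩ hst₀.le
  exact absurd (le_trans this hzs) (not_le.2 hcon)
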